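/- For every x ∈ V_l \ V_{l+1} (l ≥ 0), the family (f(θ)·θ(x))_{θ ∈ Ĝ} is absolutely summable and Σ_{θ ∈ Ĝ} f(θ)·θ(x) = Σ_{n=0}^{l} (φ_n − φ_{n+1})·q^{n·m_n}. -/

import Mathlib

open MeasureTheory Filter Topology

def UnitaryCharacter (G : Type*) [Group G] [TopologicalSpace G] :=
  {θ : G → ℂ // Continuous θ ∧ (∀ a b : G, θ (a * b) = θ a * θ b) ∧
    ∀ a : G, ‖θ a‖ = 1}

namespace UCaux

variable {G : Type*} [Group G] [TopologicalSpace G]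

theorem ne_zero (θ : UnitaryCharacter G) (g : G) : θ.1 g ≠ 0 := by
  intro h0
  have h := θ.2.2.2 g
  rw [h0] at h
  simp at h

theorem map_one (θ : UnitaryCharacter G) : θ.1 1 = 1 := by
  have h := θ.2.2.1 1 1
  rw [mul_one] at h
  exact mul_right_cancel₀ (ne_zero θ 1) (by rw [one_mul]; exact h.symm)

/-- pointwise product of two unitary characters -/
def mul (ψ θ : UnitaryCharacter G) : UnitaryCharacter G :=
  ⟨fun g => ψ.1 g * θ.1 g, ψ.2.1.mul θ.2.1, fun a b => by
    show ψ.1 (a * b) * θ.1 (a * b) = ψ.1 a * θ.1 a * (ψ.1 b * θ.1 b)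
    rw [ψ.2.2.1, θ.2.2.1]; ring, fun a => by
    show ‖ψ.1 a * θ.1 a‖ = 1
    rw [norm_mul, ψ.2.2.2, θ.2.2.2, mul_one]⟩

/-- pointwise complex conjugate of a unitary character -/
def conj (θ : UnitaryCharacter G) : UnitaryCharacter G :=
  ⟨fun g => (starRingEnd ℂ) (θ.1 g), Complex.continuous_conj.comp θ.2.1, fun a b => by
    show (starRingEnd ℂ) (θ.1 (a * b)) = _
    rw [θ.2.2.1, map_mul], fun a => by
    show ‖(starRingEnd ℂ) (θ.1 a)‖ = 1
    rw [Complex.norm_conj]; exact θ.2.2.2 a⟩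

theorem conj_mul_self (ψ : UnitaryCharacter G) (g : G) :
    (starRingEnd ℂ) (ψ.1 g) * ψ.1 g = 1 := by
  rw [mul_comm, Complex.mul_conj, Complex.normSq_eq_norm_sq, ψ.2.2.2, one_pow, Complex.ofReal_one]

theorem conj_mul_mul (ψ θ : UnitaryCharacter G) : mul (conj ψ) (mul ψ θ) = θ := by
  apply Subtype.ext; funext g
  show (starRingEnd ℂ) (ψ.1 g) * (ψ.1 g * θ.1 g) = θ.1 g
  rw [← mul_assoc, conj_mul_self, one_mul]

theorem mul_conj_mul (ψ θ : UnitaryCharacter G) : mul ψ (mul (conj ψ) θ) = θ := by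
  apply Subtype.ext; funext g
  show ψ.1 g * ((starRingEnd ℂ) (ψ.1 g) * θ.1 g) = θ.1 g
  rw [← mul_assoc, mul_comm (ψ.1 g), conj_mul_self, one_mul]

theorem sum_eval_eq_zero (B : Finset (UnitaryCharacter G)) (x : G)
    (ψ : UnitaryCharacter G) (hψx : ψ.1 x ≠ 1)
    (hmul : ∀ θ ∈ B, mul ψ θ ∈ B) (hinv : ∀ θ ∈ B, mul (conj ψ) θ ∈ B) :
    ∑ θ ∈ B, θ.1 x = 0 := by
  have key : ψ.1 x * ∑ θ ∈ B, θ.1 x = ∑ θ ∈ B, θ.1 x := by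
    rw [Finset.mul_sum]
    exact Finset.sum_nbij' (mul ψ) (mul (conj ψ)) hmul hinv
      (fun θ _ => conj_mul_mul ψ θ) (fun θ _ => mul_conj_mul ψ θ)
      (fun θ _ => rfl)
  have h2 : (ψ.1 x - 1) * ∑ θ ∈ B, θ.1 x = 0 := by
    rw [sub_mul, one_mul, key, sub_self]
  rcases mul_eq_zero.mp h2 with h | h
  · exact absurd (sub_eq_zero.mp h) hψx
  · exact h

/-- a unitary character as a monoid hom into `ℂˣ` -/
noncomputable def toUnits (θ : UnitaryCharacter G) : G →* ℂˣ where
  toFun g := Units.mk0 (θ.1 g) (ne_zero θ g)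
  map_one' := Units.ext (by simp [map_one θ])
  map_mul' a b := Units.ext (by simp [θ.2.2.1 a b])

theorem card_le_index {G : Type*} [CommGroup G] [TopologicalSpace G]
    (W : Subgroup G) [Finite (G ⧸ W)]
    (S : Set (UnitaryCharacter G)) (hS : S.Finite)
    (htriv : ∀ θ ∈ S, ∀ g ∈ W, θ.1 g = 1) :
    S.ncard ≤ W.index := by
  classical
  have hfS : Fintype S := hS.fintype
  have hfQ : Fintype (G ⧸ W) := Fintype.ofFinite _
  have hker : ∀ θ : S, ∀ g ∈ W, toUnits θ.1 g = 1 := by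
    intro θ g hg
    have h := htriv θ.1 θ.2 g hg
    exact Units.ext (by simp [toUnits, h])
  let v : S → ((G ⧸ W) →* ℂ) := fun θ =>
    (Units.coeHom ℂ).comp (QuotientGroup.lift W (toUnits θ.1) (hker θ))
  have hv_apply : ∀ θ : S, ∀ g : G, v θ (QuotientGroup.mk g) = θ.1.1 g := fun θ g => rfl
  have hinj : Function.Injective v := by
    intro a b hab
    apply Subtype.ext; apply Subtype.ext; funext g
    have h := congrArg (fun F => F (QuotientGroup.mk g : G ⧸ W)) hab
    simpa [hv_apply] using h
  have hli := (linearIndependent_monoidHom (G ⧸ W) ℂ).comp v hinj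
  have hcard := hli.fintype_card_le_finrank
  rw [Module.finrank_fintype_fun_eq_card] at hcard
  calc S.ncard = Fintype.card S := by
        rw [← Nat.card_coe_set_eq, Nat.card_eq_fintype_card]
    _ ≤ Fintype.card (G ⧸ W) := hcard
    _ = W.index := by rw [Subgroup.index_eq_card, Nat.card_eq_fintype_card]

theorem index_mul_measure {G : Type*} [CommGroup G] [TopologicalSpace G] [IsTopologicalGroup G]
    [CompactSpace G] [MeasurableSpace G] [BorelSpace G]
    (μ : Measure G) [μ.IsHaarMeasure] [IsProbabilityMeasure μ]
    (U : Subgroup G) (hU : IsOpen (U : Set G)) :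
    (U.index : ENNReal) * μ (U : Set G) = 1 := by
  classical
  have hfinQ : Finite (G ⧸ U) := Subgroup.quotient_finite_of_isOpen U hU
  have hFQ : Fintype (G ⧸ U) := Fintype.ofFinite _
  have hfiber : ∀ g : G, (QuotientGroup.mk ⁻¹' {(QuotientGroup.mk g : G ⧸ U)})
      = (fun h => g⁻¹ * h) ⁻¹' (U : Set G) := by
    intro g; ext h
    simp only [Set.mem_preimage, Set.mem_singleton_iff, QuotientGroup.eq]
    rw [← U.inv_mem_iff, mul_inv_rev, inv_inv]
    exact Iff.rfl
  have hμfiber : ∀ c : G ⧸ U, μ (QuotientGroup.mk ⁻¹' {c}) = μ (U : Set G) := by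
    intro c
    induction c using QuotientGroup.induction_on with
    | H g => rw [hfiber g]; exact measure_preimage_mul μ g⁻¹ _
  have hmeasfiber : ∀ c : G ⧸ U, MeasurableSet (QuotientGroup.mk ⁻¹' {c} : Set G) := by
    intro c
    induction c using QuotientGroup.induction_on with
    | H g =>
      rw [hfiber g]
      exact hU.measurableSet.preimage (measurable_const_mul g⁻¹)
  have hdisj : Pairwise (Function.onFun Disjoint
      fun c : G ⧸ U => (QuotientGroup.mk ⁻¹' {c} : Set G)) :=
    fun a b hab => (Set.disjoint_singleton.mpr hab).preimage _
  have h1 : (1 : ENNReal) = μ Set.univ := measure_univ.symm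
  have huniv : (Set.univ : Set G) = ⋃ c : G ⧸ U, QuotientGroup.mk ⁻¹' {c} := by
    ext g; simp
  rw [huniv, measure_iUnion hdisj hmeasfiber, tsum_fintype,
    Finset.sum_congr rfl (fun c _ => hμfiber c), Finset.sum_const, nsmul_eq_mul] at h1
  rw [Subgroup.index_eq_card, Nat.card_eq_fintype_card, ← Finset.card_univ]
  exact h1.symm

end UCaux

theorem stmt1
    (q : ℕ) (hq : 2 ≤ q)
    (m : ℕ → ℕ) (hm0 : m 0 = 0) (hm1 : m 1 = 1)
    (hmgrow : ∀ n : ℕ, 1 ≤ n → 2 * m n ≤ m (n + 1))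
    (G : Type*) [CommGroup G] [TopologicalSpace G] [IsTopologicalGroup G]
    [CompactSpace G] [MeasurableSpace G] [BorelSpace G]
    (μ : Measure G) [μ.IsHaarMeasure] [IsProbabilityMeasure μ]
    (V : ℕ → Subgroup G) (hVopen : ∀ n, IsOpen (V n : Set G))
    (hV0 : V 0 = ⊤) (hVdesc : ∀ n, V (n + 1) ≤ V n)
    (hVmeas : ∀ n, μ (V n : Set G) = ((q : ENNReal) ^ (n * m n))⁻¹)
    -- every character is identically 1 on some V_n
    (hall : ∀ θ : UnitaryCharacter G, ∃ n, ∀ x ∈ (V n : Set G), θ.1 x = 1)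
    -- the annihilator V_n^⊥ is finite of cardinality q^(n·m_n)
    (hfin : ∀ n, Set.Finite {θ : UnitaryCharacter G | ∀ x ∈ (V n : Set G), θ.1 x = 1})
    (hcard : ∀ n, Nat.card {θ : UnitaryCharacter G // ∀ x ∈ (V n : Set G), θ.1 x = 1}
      = q ^ (n * m n))
    (φ : ℕ → ℂ) (hφ : Summable fun n => ‖φ n‖ * (q : ℝ) ^ (n * m n))
    (f : UnitaryCharacter G → ℂ)
    (hf0 : ∀ θ : UnitaryCharacter G, (∀ x : G, θ.1 x = 1) → f θ = φ 0)
    (hf : ∀ θ : UnitaryCharacter G, ∀ n : ℕ, 1 ≤ n →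
      (∀ x ∈ (V n : Set G), θ.1 x = 1) →
      (∃ x ∈ (V (n - 1) : Set G), θ.1 x ≠ 1) → f θ = φ n)
    (l : ℕ) (x : G) (hx : x ∈ (V l : Set G) \ (V (l + 1) : Set G)) :
    Summable (fun θ : UnitaryCharacter G => ‖f θ * θ.1 x‖) ∧
    ∑' θ : UnitaryCharacter G, f θ * θ.1 x
      = ∑ n ∈ Finset.range (l + 1), (φ n - φ (n + 1)) * (q : ℂ) ^ (n * m n) := by
  classical
  obtain ⟨hxl, hxl1⟩ := hx
  set A : ℕ → Set (UnitaryCharacter G) :=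
    fun n => {θ : UnitaryCharacter G | ∀ y ∈ (V n : Set G), θ.1 y = 1} with hA
  set B : ℕ → Finset (UnitaryCharacter G) := fun n => (hfin n).toFinset with hB
  have hmemB : ∀ n (θ : UnitaryCharacter G), θ ∈ B n ↔ ∀ y ∈ (V n : Set G), θ.1 y = 1 := by
    intro n θ; rw [hB]; exact (hfin n).mem_toFinset
  have hVanti : Antitone V := antitone_nat_of_succ_le hVdesc
  have hBmono : Monotone B := by
    intro a b hab θ hθ
    rw [hmemB] at hθ ⊢
    intro y hy
    exact hθ y (hVanti hab hy)
  have hBcard : ∀ n, (B n).card = q ^ (n * m n) := by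
    intro n
    have h1 : Nat.card (A n) = q ^ (n * m n) := hcard n
    rw [Nat.card_coe_set_eq, Set.ncard_eq_toFinset_card (A n) (hfin n)] at h1
    exact h1
  -- the least n on which θ is trivial
  set N : UnitaryCharacter G → ℕ := fun θ => Nat.find (hall θ) with hN
  have hNmem : ∀ θ, θ ∈ B (N θ) := fun θ => (hmemB _ _).2 (Nat.find_spec (hall θ))
  have hfN : ∀ θ, f θ = φ (N θ) := by
    intro θ
    rcases Nat.eq_zero_or_pos (N θ) with h0 | hpos
    · rw [h0]
      apply hf0
      intro g
      have hspec : ∀ y ∈ (V (N θ) : Set G), θ.1 y = 1 := Nat.find_spec (hall θ)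
      rw [h0] at hspec
      exact hspec g (by rw [hV0]; trivial)
    · obtain ⟨n, hn⟩ := Nat.exists_eq_add_of_lt hpos
      rw [zero_add] at hn
      have hspec : ∀ y ∈ (V (N θ) : Set G), θ.1 y = 1 := Nat.find_spec (hall θ)
      have hmin : ¬ ∀ y ∈ (V n : Set G), θ.1 y = 1 :=
        Nat.find_min (hall θ) (show n < N θ from hn ▸ n.lt_succ_self)
      push_neg at hmin
      obtain ⟨y, hy1, hy2⟩ := hmin
      refine hf θ (N θ) (hn ▸ Nat.le_add_left 1 n) hspec ⟨y, ?_, hy2⟩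
      rw [show N θ - 1 = n by omega]
      exact hy1
  -- summability
  have habs : ∀ θ : UnitaryCharacter G, ‖f θ * θ.1 x‖ = ‖f θ‖ := by
    intro θ
    rw [norm_mul, θ.2.2.2 x, mul_one]
  have hφnonneg : ∀ n, 0 ≤ ‖φ n‖ * (q : ℝ) ^ (n * m n) := by
    intro n; positivity
  have hsum1 : Summable (fun θ : UnitaryCharacter G => ‖f θ * θ.1 x‖) := by
    apply summable_of_sum_le (c := ∑' n, ‖φ n‖ * (q : ℝ) ^ (n * m n))
      (fun θ => norm_nonneg _)
    intro u
    set M := u.sup N with hM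
    have hmaps : ∀ θ ∈ u, N θ ∈ Finset.range (M + 1) := by
      intro θ hθ
      rw [Finset.mem_range]
      exact Nat.lt_succ_of_le (Finset.le_sup hθ)
    calc ∑ θ ∈ u, ‖f θ * θ.1 x‖
        = ∑ θ ∈ u, ‖φ (N θ)‖ := by
          refine Finset.sum_congr rfl fun θ _ => ?_
          rw [habs, hfN]
      _ = ∑ n ∈ Finset.range (M + 1), ∑ θ ∈ u.filter (fun θ => N θ = n), ‖φ (N θ)‖ :=
          (Finset.sum_fiberwise_of_maps_to hmaps _).symm
      _ ≤ ∑ n ∈ Finset.range (M + 1), ‖φ n‖ * (q : ℝ) ^ (n * m n) := by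
          refine Finset.sum_le_sum fun n _ => ?_
          have h1 : ∑ θ ∈ u.filter (fun θ => N θ = n), ‖φ (N θ)‖
              = (u.filter (fun θ => N θ = n)).card * ‖φ n‖ := by
            rw [Finset.sum_congr rfl (fun θ hθ => by
              rw [(Finset.mem_filter.mp hθ).2]), Finset.sum_const, nsmul_eq_mul]
          rw [h1]
          have h2 : (u.filter (fun θ => N θ = n)).card ≤ q ^ (n * m n) := by
            rw [← hBcard n]
            apply Finset.card_le_card
            intro θ hθ
            obtain ⟨-, hθ2⟩ := Finset.mem_filter.mp hθ
            rw [← hθ2]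
            exact hNmem θ
          calc ((u.filter (fun θ => N θ = n)).card : ℝ) * ‖φ n‖
              ≤ (q : ℝ) ^ (n * m n) * ‖φ n‖ := by
                apply mul_le_mul_of_nonneg_right _ (norm_nonneg _)
                exact_mod_cast h2
            _ = ‖φ n‖ * (q : ℝ) ^ (n * m n) := by ring
      _ ≤ ∑' n, ‖φ n‖ * (q : ℝ) ^ (n * m n) :=
          hφ.sum_le_tsum _ (fun n _ => hφnonneg n)
  refine ⟨hsum1, ?_⟩
  -- existence of a character trivial on V (l+1) but not at x
  obtain ⟨ψ, hψmem, hψx⟩ : ∃ ψ : UnitaryCharacter G, ψ ∈ B (l + 1) ∧ ψ.1 x ≠ 1 := by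
    by_contra hcon
    push_neg at hcon
    set e := (l + 1) * m (l + 1) with he
    set U := V (l + 1) with hU
    set W := U ⊔ Subgroup.zpowers x with hW
    have hUW : U ≤ W := le_sup_left
    have hxW : x ∈ W := Subgroup.mem_sup_right (Subgroup.mem_zpowers x)
    have hWopen : IsOpen (W : Set G) := Subgroup.isOpen_mono hUW (hVopen (l + 1))
    have hQfin : Finite (G ⧸ W) := Subgroup.quotient_finite_of_isOpen W hWopen
    have htrivW : ∀ θ ∈ A (l + 1), ∀ g ∈ W, θ.1 g = 1 := by
      intro θ hθ
      have hθB : θ ∈ B (l + 1) := (hmemB _ _).2 hθ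
      have hle : W ≤ (UCaux.toUnits θ).ker := by
        rw [hW]
        refine sup_le ?_ ?_
        · intro g hg
          rw [MonoidHom.mem_ker]
          exact Units.ext (by simp [UCaux.toUnits, hθ g hg])
        · rw [Subgroup.zpowers_le, MonoidHom.mem_ker]
          exact Units.ext (by simp [UCaux.toUnits, hcon θ hθB])
      intro g hg
      have h := hle hg
      rw [MonoidHom.mem_ker] at h
      have := congrArg Units.val h
      simpa [UCaux.toUnits] using this
    have hbound : (A (l + 1)).ncard ≤ W.index :=
      UCaux.card_le_index W (A (l + 1)) (hfin (l + 1)) htrivW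
    have hAcard : (A (l + 1)).ncard = q ^ e := by
      rw [← Nat.card_coe_set_eq]
      exact hcard (l + 1)
    have hUmeas := UCaux.index_mul_measure μ U (hVopen (l + 1))
    rw [hVmeas (l + 1), ← he] at hUmeas
    have hq0 : ((q : ENNReal) ^ e) ≠ 0 := by
      apply pow_ne_zero
      simp only [ne_eq, Nat.cast_eq_zero]
      omega
    have hqt : ((q : ENNReal) ^ e) ≠ ⊤ := by
      apply ENNReal.pow_ne_top
      exact ENNReal.natCast_ne_top q
    have hUidx : (U.index : ENNReal) = (q : ENNReal) ^ e := by
      have := congrArg (fun z => z * (q : ENNReal) ^ e) hUmeas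
      simpa [mul_assoc, ENNReal.inv_mul_cancel hq0 hqt] using this
    have hUidx' : U.index = q ^ e := by
      have : (U.index : ENNReal) = ((q ^ e : ℕ) : ENNReal) := by
        rw [hUidx]; push_cast; ring
      exact_mod_cast this
    have hrel : U.relIndex W * W.index = U.index := Subgroup.relIndex_mul_index hUW
    have hWge : q ^ e ≤ W.index := by
      rw [← hAcard]; exact hbound
    have hqe_pos : 0 < q ^ e := Nat.pow_pos (by omega)
    have hrel1 : U.relIndex W = 1 := by
      have hne : U.relIndex W ≠ 0 := by
        intro h0
        rw [h0, zero_mul] at hrel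
        rw [hUidx'] at hrel
        omega
      by_contra hne1
      have h2 : 2 ≤ U.relIndex W := by omega
      have h3 : 2 * W.index ≤ U.relIndex W * W.index := Nat.mul_le_mul_right _ h2
      rw [hrel, hUidx'] at h3
      omega
    have hWU : W ≤ U := Subgroup.relIndex_eq_one.mp hrel1
    exact hxl1 (hWU hxW)
  -- partial sums over B n
  set T : ℕ → ℂ := fun k => ∑ θ ∈ B k, θ.1 x with hT
  have hsplit : ∀ n (F : UnitaryCharacter G → ℂ),
      ∑ θ ∈ B (n + 1), F θ = ∑ θ ∈ B n, F θ + ∑ θ ∈ B (n + 1) \ B n, F θ := by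
    intro n F
    linear_combination -(Finset.sum_sdiff (f := F) (hBmono (Nat.le_succ n)))
  have hSform : ∀ n, ∑ θ ∈ B n, f θ * θ.1 x
      = φ n * T n + ∑ k ∈ Finset.range n, (φ k - φ (k + 1)) * T k := by
    intro n
    induction n with
    | zero =>
      simp only [Finset.range_zero, Finset.sum_empty, add_zero, hT]
      rw [Finset.mul_sum]
      refine Finset.sum_congr rfl fun θ hθ => ?_
      have : f θ = φ 0 := by
        apply hf0
        intro g
        exact (hmemB 0 θ).1 hθ g (by rw [hV0]; trivial)
      rw [this]
    | succ n ih =>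
      have hdiff : ∀ θ ∈ B (n + 1) \ B n, f θ = φ (n + 1) := by
        intro θ hθ
        rw [Finset.mem_sdiff] at hθ
        obtain ⟨h1, h2⟩ := hθ
        have h3 : ∃ y ∈ (V n : Set G), θ.1 y ≠ 1 := by
          by_contra hc
          push_neg at hc
          exact h2 ((hmemB _ _).2 hc)
        refine hf θ (n + 1) (by omega) ((hmemB _ _).1 h1) ?_
        simpa using h3
      have hdsum : ∑ θ ∈ B (n + 1) \ B n, f θ * θ.1 x = φ (n + 1) * (T (n + 1) - T n) := by
        rw [Finset.sum_congr rfl (fun θ hθ => by rw [hdiff θ hθ]), ← Finset.mul_sum]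
        congr 1
        have h := hsplit n (fun θ => θ.1 x)
        rw [hT]
        simp only at h ⊢
        linear_combination -h
      rw [hsplit n (fun θ => f θ * θ.1 x), ih, hdsum, Finset.sum_range_succ]
      ring
  have hTval : ∀ k, k ≤ l → T k = (q : ℂ) ^ (k * m k) := by
    intro k hk
    have h1 : ∀ θ ∈ B k, θ.1 x = (1 : ℂ) := fun θ hθ =>
      (hmemB _ _).1 hθ x (hVanti hk hxl)
    rw [hT]
    simp only
    rw [Finset.sum_congr rfl h1, Finset.sum_const, nsmul_eq_mul, mul_one, hBcard k]
    push_cast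
    ring
  have hTzero : ∀ k, l + 1 ≤ k → T k = 0 := by
    intro k hk
    refine UCaux.sum_eval_eq_zero (B k) x ψ hψx ?_ ?_
    · intro θ hθ
      rw [hmemB] at hθ ⊢
      intro y hy
      show ψ.1 y * θ.1 y = 1
      rw [hθ y hy, (hmemB _ _).1 (hBmono hk hψmem) y hy, mul_one]
    · intro θ hθ
      rw [hmemB] at hθ ⊢
      intro y hy
      show (starRingEnd ℂ) (ψ.1 y) * θ.1 y = 1
      rw [hθ y hy, (hmemB _ _).1 (hBmono hk hψmem) y hy, mul_one, map_one]
  -- the partial sums are eventually constant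
  set target : ℂ := ∑ n ∈ Finset.range (l + 1), (φ n - φ (n + 1)) * (q : ℂ) ^ (n * m n)
    with htarget
  have hconst : ∀ n, l + 1 ≤ n → ∑ θ ∈ B n, f θ * θ.1 x = target := by
    intro n hn
    rw [hSform n, hTzero n hn, mul_zero, zero_add, htarget]
    rw [← Finset.sum_subset (Finset.range_subset_range.2 hn)
      (fun k hk1 hk2 => by
        rw [hTzero k (by
          rw [Finset.mem_range] at hk1 hk2
          omega), mul_zero])]
    refine Finset.sum_congr rfl fun k hk => ?_
    rw [hTval k (by rw [Finset.mem_range] at hk; omega)]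
  have hsum2 : Summable (fun θ : UnitaryCharacter G => f θ * θ.1 x) :=
    Summable.of_norm hsum1
  have hBtop : Tendsto B atTop atTop :=
    tendsto_atTop_finset_of_monotone hBmono (fun θ => ⟨N θ, hNmem θ⟩)
  have hlim1 : Tendsto (fun n => ∑ θ ∈ B n, f θ * θ.1 x) atTop
      (𝓝 (∑' θ : UnitaryCharacter G, f θ * θ.1 x)) :=
    hsum2.hasSum.comp hBtop
  have hlim2 : Tendsto (fun n => ∑ θ ∈ B n, f θ * θ.1 x) atTop (𝓝 target) := by
    refine Tendsto.congr' ?_ (tendsto_const_nhds : Tendsto (fun _ : ℕ => target) atTop (𝓝 target))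
    filter_upwards [eventually_ge_atTop (l + 1)] with n hn
    exact (hconst n hn).symm
  exact tendsto_nhds_unique hlim1 hlim2
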